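/- arXiv:2409.12268 — 3 statements merged into one kernel-verified Lean document; each statement's English description precedes it below -/
import Mathlib

section
/- Let G = A ∗_C B be an amalgamated free product of countable groups, with fixed left transversals S_A of C in A and S_B of C in B both containing 1, and let ã ∈ S_A \ {1}. Then for every a ∈ S_A \ {1}, the bounded operators on ℓ²(G) satisfy D_ã − R_{a⁻¹} D_ã R_a = pr_C L_{ã⁻¹} − R_{a⁻¹} pr_C L_{ã⁻¹} R_a, where pr_C is the orthogonal projection of ℓ²(G) onto the closed subspace spanned by {δ_c : c ∈ C}. -/
noncomputable section

open ComplexConjugate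
open scoped ENNReal

local notation "⟪" x ", " y "⟫" => @inner ℂ _ _ x y

/-- ℓ²(G): square summable complex valued functions. -/
abbrev L2 (G : Type) : Type := lp (fun _ : G => ℂ) 2

/-- The standard orthonormal basis vector δ_g of ℓ²(G). -/
def delta {G : Type} (g : G) : L2 G :=
  letI := Classical.decEq G
  lp.single 2 g 1

theorem memℓp_comp_equiv {G : Type} (e : G ≃ G) (x : L2 G) :
    Memℓp (fun g => x (e g)) 2 := by
  have h2 : (0:ℝ) < (2:ℝ≥0∞).toReal := by norm_num
  rw [memℓp_gen_iff h2]
  have hx : Summable fun i => ‖x i‖ ^ (2:ℝ≥0∞).toReal := (memℓp_gen_iff h2).1 (lp.memℓp x)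
  exact (e.summable_iff (f := fun i => ‖x i‖ ^ (2:ℝ≥0∞).toReal)).2 hx

/-- The isometry of ℓ²(G) induced by precomposition with a bijection of G. -/
def lpShift {G : Type} (e : G ≃ G) : L2 G ≃ₗᵢ[ℂ] L2 G where
  toFun x := ⟨fun g => x (e g), memℓp_comp_equiv e x⟩
  invFun x := ⟨fun g => x (e.symm g), memℓp_comp_equiv e.symm x⟩
  left_inv x := by
    apply Subtype.ext
    funext g
    simp
  right_inv x := by
    apply Subtype.ext
    funext g
    simp
  map_add' x y := by
    apply Subtype.ext
    funext g
    simp only [lp.coeFn_add]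
    rfl
  map_smul' c x := by
    apply Subtype.ext
    funext g
    simp [lp.coeFn_smul, Pi.smul_apply]
  norm_map' x := by
    have h2 : (0:ℝ) < (2:ℝ≥0∞).toReal := by norm_num
    rw [lp.norm_eq_tsum_rpow h2, lp.norm_eq_tsum_rpow h2]
    congr 1
    exact e.tsum_eq (f := fun g => ‖x g‖ ^ (2:ℝ≥0∞).toReal)

/-- Right translation operator R_h : δ_g ↦ δ_{gh}. -/
def Rop {G : Type} [Group G] (h : G) : L2 G →L[ℂ] L2 G :=
  (lpShift (Equiv.mulRight h⁻¹)).toLinearIsometry.toContinuousLinearMap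

/-- Left translation operator L_h : δ_g ↦ δ_{hg}. -/
def Lop {G : Type} [Group G] (h : G) : L2 G →L[ℂ] L2 G :=
  (lpShift (Equiv.mulLeft h⁻¹)).toLinearIsometry.toContinuousLinearMap

/-- A bounded operator has finite rank if its range is finite dimensional. -/
def FiniteRank {G : Type} (T : L2 G →L[ℂ] L2 G) : Prop :=
  FiniteDimensional ℂ ↥(LinearMap.range (T : L2 G →ₗ[ℂ] L2 G))

/-- The right action T·g := R_g ∘ T ∘ R_{g⁻¹} of G on operators. -/
def opAct {G : Type} [Group G] (T : L2 G →L[ℂ] L2 G) (g : G) : L2 G →L[ℂ] L2 G :=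
  Rop g ∘L T ∘L Rop g⁻¹

/-- The subspace F(ℓ²(G))·I_{ℂ[H]}: the ℂ-linear span of the operators T - T·h with
T of finite rank and h ∈ H. -/
def FIdeal {G : Type} [Group G] (H : Subgroup G) : Submodule ℂ (L2 G →L[ℂ] L2 G) :=
  Submodule.span ℂ
    {S | ∃ (T : L2 G →L[ℂ] L2 G) (h : G), FiniteRank T ∧ h ∈ H ∧ S = T - opAct T h}

/-- The trace of a (finite rank) operator on ℓ²(G). -/
def opTrace {G : Type} (T : L2 G →L[ℂ] L2 G) : ℂ :=
  ∑' g : G, ⟪delta g, T (delta g)⟫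

/-- A word `[gₙ, …, g₂, g₁]` (with `gₙ` listed first) is in normal form with respect to
left transversals `SA`, `SB` and the amalgamated subgroup `C`: the last letter `g₁` lies
in `C`, the remaining letters are non-identity elements of `SA ∪ SB`, and consecutive
letters lie in different transversals. -/
def IsNormalWord {G : Type} [Group G] (SA SB : Set G) (C : Subgroup G) (l : List G) : Prop :=
  ∃ (l' : List G) (c : G), l = l' ++ [c] ∧ c ∈ C ∧
    (∀ x ∈ l', x ∈ SA ∪ SB ∧ x ≠ 1) ∧
    l'.Chain' fun x y => ¬(x ∈ SA ∧ y ∈ SA) ∧ ¬(x ∈ SB ∧ y ∈ SB)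

/-- The structure of an amalgamated free product `G = A ∗_C B` together with fixed left
transversals of `C` in `A` and in `B` (both containing `1`) and the resulting unique
normal form: every `g ∈ G` is uniquely written as `g = gₙ ⋯ g₂ g₁` with `g₁ ∈ C`, each
`gᵢ` (`i ≥ 2`) a non-identity element of a transversal, and consecutive letters in
different transversals.  The normal form of `g` is recorded as the list
`nf g = [gₙ, …, g₂, g₁]`; the normal form of `g` *ends in* `gₙ`, the head of `nf g`. -/
structure AmalgamatedNormalFormData (G : Type) [Group G] (A B C : Subgroup G) where
  le_A : C ≤ A
  le_B : C ≤ B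
  SA : Set G
  SB : Set G
  SA_subset : SA ⊆ (A : Set G)
  SB_subset : SB ⊆ (B : Set G)
  one_mem_SA : (1 : G) ∈ SA
  one_mem_SB : (1 : G) ∈ SB
  transversal_A : ∀ a ∈ A, ∃! p : G × G, p.1 ∈ SA ∧ p.2 ∈ C ∧ a = p.1 * p.2
  transversal_B : ∀ b ∈ B, ∃! p : G × G, p.1 ∈ SB ∧ p.2 ∈ C ∧ b = p.1 * p.2
  nf : G → List G
  nf_normal : ∀ g : G, IsNormalWord SA SB C (nf g)
  nf_prod : ∀ g : G, (nf g).prod = g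
  nf_unique : ∀ (g : G) (l : List G), IsNormalWord SA SB C l → l.prod = g → l = nf g

/-- The normal form of `g` ends in `s`. -/
def AmalgamatedNormalFormData.EndsIn {G : Type} [Group G] {A B C : Subgroup G}
    (d : AmalgamatedNormalFormData G A B C) (g s : G) : Prop :=
  (d.nf g).head? = some s

/-- The orthogonal projection of `ℓ²(G)` onto the closed subspace spanned by
`{δ_c : c ∈ C}`, as a bounded operator on `ℓ²(G)`. -/
def projC {G : Type} [Group G] (C : Subgroup G) : L2 G →L[ℂ] L2 G :=
  haveI : CompleteSpace ↥(Submodule.span ℂ (delta '' (C : Set G))).topologicalClosure :=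
    IsClosed.completeSpace_coe (hs := Submodule.isClosed_topologicalClosure _)
  (Submodule.span ℂ (delta '' (C : Set G))).topologicalClosure.subtypeL ∘L
    Submodule.orthogonalProjectionOnto (Submodule.span ℂ (delta '' (C : Set G))).topologicalClosure

section OperatorLayer

variable {G : Type}

open scoped Classical in
lemma delta_apply (g k : G) : delta g k = if k = g then (1:ℂ) else 0 := by
  letI := Classical.decEq G
  rw [delta, lp.single_apply]
  split_ifs with h
  · subst h; simp
  · simp [h]

lemma delta_apply_self (g : G) : delta g g = 1 := by simp [delta_apply]

lemma delta_apply_ne {g k : G} (h : k ≠ g) : delta g k = 0 := by simp [delta_apply, h]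

lemma inner_delta_left (g : G) (x : L2 G) : ⟪delta g, x⟫ = x g := by
  letI := Classical.decEq G
  rw [delta, lp.inner_single_left]
  simp

lemma single_eq_smul_delta (i : G) (v : ℂ) :
    (letI := Classical.decEq G; lp.single 2 i v) = v • delta i := by
  letI := Classical.decEq G
  rw [delta, ← lp.single_smul]
  norm_num

lemma ext_delta {T S : L2 G →L[ℂ] L2 G} (h : ∀ g, T (delta g) = S (delta g)) : T = S := by
  letI := Classical.decEq G
  refine ContinuousLinearMap.ext fun x => ?_
  have hx : HasSum (fun i : G => lp.single 2 i (x i)) x :=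
    lp.hasSum_single (by norm_num) x
  have hT : HasSum (fun i : G => T (lp.single 2 i (x i))) (T x) := hx.mapL T
  have hS : HasSum (fun i : G => S (lp.single 2 i (x i))) (S x) := hx.mapL S
  refine hT.unique ?_
  convert hS using 2 with i
  rw [single_eq_smul_delta, map_smul, map_smul, h i]

lemma Rop_delta [Group G] (h g : G) : Rop h (delta g) = delta (g * h) := by
  apply Subtype.ext
  funext k
  show delta g (k * h⁻¹) = delta (g * h) k
  by_cases hk : k = g * h
  · subst hk
    rw [delta_apply_self, show g * h * h⁻¹ = g by group, delta_apply_self]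
  · rw [delta_apply_ne hk, delta_apply_ne]
    intro hc
    exact hk (by rw [← hc]; group)

lemma Lop_delta [Group G] (h g : G) : Lop h (delta g) = delta (h * g) := by
  apply Subtype.ext
  funext k
  show delta g (h⁻¹ * k) = delta (h * g) k
  by_cases hk : k = h * g
  · subst hk
    rw [show h⁻¹ * (h * g) = g by group, delta_apply_self, delta_apply_self]
  · rw [delta_apply_ne hk, delta_apply_ne]
    intro hc
    exact hk (by rw [← hc]; group)

lemma projC_delta_mem [Group G] {C : Subgroup G} {g : G} (hg : g ∈ C) :
    projC C (delta g) = delta g := by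
  haveI : CompleteSpace
      ↥(Submodule.span ℂ (delta '' (C : Set G))).topologicalClosure :=
    IsClosed.completeSpace_coe (hs := Submodule.isClosed_topologicalClosure _)
  have hmem : delta g ∈ (Submodule.span ℂ (delta '' (C : Set G))).topologicalClosure :=
    Submodule.le_topologicalClosure _ (Submodule.subset_span ⟨g, hg, rfl⟩)
  exact Submodule.starProjection_eq_self_iff.mpr hmem

lemma projC_delta_not_mem [Group G] {C : Subgroup G} {g : G} (hg : g ∉ C) :
    projC C (delta g) = 0 := by
  haveI : CompleteSpace
      ↥(Submodule.span ℂ (delta '' (C : Set G))).topologicalClosure :=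
    IsClosed.completeSpace_coe (hs := Submodule.isClosed_topologicalClosure _)
  have horth : delta g ∈ (Submodule.span ℂ (delta '' (C : Set G)))ᗮ := by
    rw [Submodule.mem_orthogonal]
    intro u hu
    induction hu using Submodule.span_induction with
    | mem u hu =>
        obtain ⟨c, hc, rfl⟩ := hu
        rw [inner_delta_left, delta_apply_ne]
        intro hcg
        exact hg (hcg ▸ hc)
    | zero => exact inner_zero_left _
    | add u v _ _ hu hv => rw [inner_add_left, hu, hv, add_zero]
    | smul c u _ hu => rw [inner_smul_left, hu, mul_zero]
  have horth' : delta g ∈ ((Submodule.span ℂ (delta '' (C : Set G))).topologicalClosure)ᗮ := by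
    rw [← Submodule.orthogonal_orthogonal_eq_closure]
    exact Submodule.le_orthogonal_orthogonal _ horth
  show ((Submodule.span ℂ (delta '' (C : Set G))).topologicalClosure.subtypeL)
      (Submodule.orthogonalProjectionOnto _ (delta g)) = 0
  rw [Submodule.orthogonalProjectionOnto_apply_of_mem_orthogonal horth']
  simp

end OperatorLayer

section Combinatorics

variable {G : Type} [Group G]

lemma IsNormalWord.symm {SA SB : Set G} {C : Subgroup G} {l : List G}
    (h : IsNormalWord SA SB C l) : IsNormalWord SB SA C l := by
  obtain ⟨l', c, rfl, hc, hm, hch⟩ := h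
  refine ⟨l', c, rfl, hc, fun x hx => ⟨?_, (hm x hx).2⟩,
    hch.imp fun a b hab => ⟨hab.2, hab.1⟩⟩
  rcases (hm x hx).1 with h | h
  · exact Set.mem_union_right _ h
  · exact Set.mem_union_left _ h

def AmalgamatedNormalFormData.swap {A B C : Subgroup G}
    (d : AmalgamatedNormalFormData G A B C) : AmalgamatedNormalFormData G B A C where
  le_A := d.le_B
  le_B := d.le_A
  SA := d.SB
  SB := d.SA
  SA_subset := d.SB_subset
  SB_subset := d.SA_subset
  one_mem_SA := d.one_mem_SB
  one_mem_SB := d.one_mem_SA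
  transversal_A := d.transversal_B
  transversal_B := d.transversal_A
  nf := d.nf
  nf_normal g := (d.nf_normal g).symm
  nf_prod := d.nf_prod
  nf_unique g l h hp := d.nf_unique g l h.symm hp

lemma isNormalWord_parts {SA SB : Set G} {C : Subgroup G} {l' : List G} {c : G}
    (h : IsNormalWord SA SB C (l' ++ [c])) :
    c ∈ C ∧ (∀ x ∈ l', x ∈ SA ∪ SB ∧ x ≠ 1) ∧
      l'.Chain' (fun x y => ¬(x ∈ SA ∧ y ∈ SA) ∧ ¬(x ∈ SB ∧ y ∈ SB)) := by
  obtain ⟨l₂, c₂, heq, hc₂, hm, hch⟩ := h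
  obtain ⟨rfl, h2⟩ := List.append_inj' heq rfl
  obtain rfl : c = c₂ := by simpa using h2
  exact ⟨hc₂, hm, hch⟩

namespace AmalgamatedNormalFormData

variable {A B C : Subgroup G} (d : AmalgamatedNormalFormData G A B C)

lemma nf_parts {g : G} {l' : List G} {c : G} (h : d.nf g = l' ++ [c]) :
    c ∈ C ∧ (∀ x ∈ l', x ∈ d.SA ∪ d.SB ∧ x ≠ 1) ∧
      l'.Chain' (fun x y => ¬(x ∈ d.SA ∧ y ∈ d.SA) ∧ ¬(x ∈ d.SB ∧ y ∈ d.SB)) :=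
  isNormalWord_parts (h ▸ d.nf_normal g)

lemma nf_eq {g : G} {l' : List G} {c : G} (hc : c ∈ C)
    (hm : ∀ x ∈ l', x ∈ d.SA ∪ d.SB ∧ x ≠ 1)
    (hch : l'.Chain' (fun x y => ¬(x ∈ d.SA ∧ y ∈ d.SA) ∧ ¬(x ∈ d.SB ∧ y ∈ d.SB)))
    (hp : (l' ++ [c]).prod = g) : d.nf g = l' ++ [c] :=
  (d.nf_unique g _ ⟨l', c, rfl, hc, hm, hch⟩ hp).symm

lemma eq_one_of_SA_of_C {s : G} (hs : s ∈ d.SA) (hsc : s ∈ C) : s = 1 := by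
  obtain ⟨p, -, hu⟩ := d.transversal_A s (d.SA_subset hs)
  have h1 := hu (s, 1) ⟨hs, one_mem _, by simp⟩
  have h2 := hu (1, s) ⟨d.one_mem_SA, hsc, by simp⟩
  exact congrArg Prod.fst (h1.trans h2.symm)

lemma not_mem_C {s : G} (hs : s ∈ d.SA) (hs1 : s ≠ 1) : s ∉ C :=
  fun h => hs1 (d.eq_one_of_SA_of_C hs h)

lemma nf_mul_mem_C {h : G} {m : List G} {c₀ : G} (hnf : d.nf h = m ++ [c₀]) {c : G}
    (hc : c ∈ C) : d.nf (h * c) = m ++ [c₀ * c] := by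
  obtain ⟨hc₀, hm, hch⟩ := d.nf_parts hnf
  refine d.nf_eq (mul_mem hc₀ hc) hm hch ?_
  have hp := d.nf_prod h
  rw [hnf] at hp
  rw [List.prod_append, List.prod_singleton] at hp ⊢
  rw [← mul_assoc, hp]

lemma nf_of_mem_A {g : G} (hg : g ∈ A) :
    ∃ s c, s ∈ d.SA ∧ c ∈ C ∧ g = s * c ∧
      ((s = 1 ∧ d.nf g = [c]) ∨ (s ≠ 1 ∧ d.nf g = [s, c])) := by
  obtain ⟨⟨s, c⟩, ⟨hs, hc, heq⟩, -⟩ := d.transversal_A g hg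
  dsimp only at hs hc heq
  by_cases h1 : s = 1
  · subst h1
    refine ⟨1, c, d.one_mem_SA, hc, heq, Or.inl ⟨rfl, ?_⟩⟩
    have : d.nf g = [] ++ [c] := d.nf_eq hc (by simp) List.isChain_nil (by simp [heq])
    simpa using this
  · refine ⟨s, c, hs, hc, heq, Or.inr ⟨h1, ?_⟩⟩
    have : d.nf g = [s] ++ [c] :=
      d.nf_eq hc (by simpa using ⟨Or.inl hs, h1⟩) (List.isChain_singleton _) (by simp [heq])
    simpa using this

lemma mul_letter_base {g c : G} (hnf : d.nf g = [c]) {t : G} (ht : t ∈ d.SA)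
    (htC : t ∉ C) :
    ∃ s c₀, s ∈ d.SA ∧ s ≠ 1 ∧ c₀ ∈ C ∧ d.nf (g * t) = [s, c₀] := by
  have hcC : c ∈ C := (d.nf_parts (show d.nf g = [] ++ [c] by simpa using hnf)).1
  have hgc : g = c := by
    have hp := d.nf_prod g; rw [hnf] at hp; simpa using hp.symm
  obtain ⟨⟨s, c₀⟩, ⟨hs, hc₀, heq⟩, -⟩ :=
    d.transversal_A (c * t) (mul_mem (d.le_A hcC) (d.SA_subset ht))
  dsimp only at hs hc₀ heq
  have hs1 : s ≠ 1 := by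
    rintro rfl
    rw [one_mul] at heq
    have ht' : t = c⁻¹ * c₀ := by rw [← heq]; group
    exact htC (ht' ▸ mul_mem (inv_mem hcC) hc₀)
  refine ⟨s, c₀, hs, hs1, hc₀, ?_⟩
  have : d.nf (g * t) = [s] ++ [c₀] :=
    d.nf_eq hc₀ (by simpa using ⟨Or.inl hs, hs1⟩) (List.isChain_singleton _)
      (by rw [List.prod_append]; simp [← heq, hgc])
  simpa using this

end AmalgamatedNormalFormData

theorem mul_letter :
    ∀ (N : ℕ) {G : Type} [Group G] {A B C : Subgroup G}
      (d : AmalgamatedNormalFormData G A B C) (g : G) (l' : List G) (c : G),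
      l'.length ≤ N → d.nf g = l' ++ [c] → ∀ t, t ∈ d.SA → t ∉ C →
      ∃ (n : ℕ) (tail : List G) (c₀ : G), c₀ ∈ C ∧ n ≤ l'.length ∧
        (tail = [] ∨ ∃ s, tail = [s]) ∧
        d.nf (g * t) = l'.take n ++ (tail ++ [c₀]) ∧
        (n = 0 → ∀ y ∈ l'.head?, (y ∈ d.SA ∧ y⁻¹ * (g * t) ∈ A) ∨
          (y ∈ d.SB ∧ y⁻¹ * (g * t) ∈ B)) := by
  intro N
  induction N with
  | zero =>
    intro G _ A B C d g l' c hlen hnf t ht htC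
    have hl' : l' = [] := List.length_eq_zero_iff.mp (Nat.le_zero.mp hlen)
    subst hl'
    obtain ⟨s, c₀, hs, hs1, hc₀, hnf'⟩ := d.mul_letter_base (by simpa using hnf) ht htC
    exact ⟨0, [s], c₀, hc₀, le_refl _, Or.inr ⟨s, rfl⟩, by simpa using hnf',
      fun _ y hy => by simp at hy⟩
  | succ N ih =>
    intro G _ A B C d g l' c hlen hnf t ht htC
    rcases l'.eq_nil_or_concat' with rfl | ⟨l'', x, rfl⟩
    · obtain ⟨s, c₀, hs, hs1, hc₀, hnf'⟩ := d.mul_letter_base (by simpa using hnf) ht htC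
      exact ⟨0, [s], c₀, hc₀, le_refl _, Or.inr ⟨s, rfl⟩, by simpa using hnf',
        fun _ y hy => by simp at hy⟩
    · obtain ⟨hcC, hmem, hchain⟩ := d.nf_parts hnf
      obtain ⟨hxU, hx1⟩ := hmem x (by simp)
      have hg : g * t = l''.prod * (x * (c * t)) := by
        have hp := d.nf_prod g
        rw [hnf] at hp
        rw [← hp]
        simp [List.prod_append, mul_assoc]
      have hctA : c * t ∈ A := mul_mem (d.le_A hcC) (d.SA_subset ht)
      obtain ⟨⟨s, c'⟩, ⟨hs, hc', hect⟩, -⟩ := d.transversal_A (c * t) hctA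
      dsimp only at hs hc' hect
      have hs1 : s ≠ 1 := by
        rintro rfl
        rw [one_mul] at hect
        have ht' : t = c⁻¹ * c' := by rw [← hect]; group
        exact htC (ht' ▸ mul_mem (inv_mem hcC) hc')
      have hmem'' : ∀ y ∈ l'', y ∈ d.SA ∪ d.SB ∧ y ≠ 1 :=
        fun y hy => hmem y (by simp [hy])
      have hchain'' := (List.isChain_append.mp hchain).1
      have hlen'' : l''.length ≤ N := by simp at hlen; omega
      have hnfl'' : d.nf l''.prod = l'' ++ [1] :=
        d.nf_eq (one_mem _) hmem'' hchain'' (by simp)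
      by_cases hxA : x ∈ d.SA
      · obtain ⟨⟨s₂, c₂⟩, ⟨hs₂, hc₂, he₂⟩, -⟩ :=
          d.transversal_A (x * (c * t)) (mul_mem (d.SA_subset hxA) hctA)
        dsimp only at hs₂ hc₂ he₂
        by_cases hs₂1 : s₂ = 1
        · subst hs₂1
          rw [one_mul] at he₂
          have hgt : g * t = l''.prod * c₂ := by rw [hg, he₂]
          have hnfgt : d.nf (g * t) = l'' ++ [c₂] :=
            d.nf_eq hc₂ hmem'' hchain''
              (by rw [List.prod_append, List.prod_singleton, ← hgt])
          refine ⟨l''.length, [], c₂, hc₂, by simp, Or.inl rfl, ?_, ?_⟩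
          · rw [List.take_left]; simpa using hnfgt
          · intro hn0 y hy
            have hl''nil : l'' = [] := List.length_eq_zero_iff.mp hn0
            subst hl''nil
            have hxy : x = y := by simpa using hy
            subst hxy
            refine Or.inl ⟨hxA, ?_⟩
            have hxg : x⁻¹ * (g * t) = c * t := by rw [hg]; simp
            exact hxg ▸ hctA
        · have hs₂C : s₂ ∉ C := d.not_mem_C hs₂ hs₂1
          obtain ⟨n₂, tail₂, c₀₂, hc₀₂, hn₂, htail₂, hnf₂, hside₂⟩ :=
            ih d l''.prod l'' 1 hlen'' hnfl'' s₂ hs₂ hs₂C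
          have hgt : g * t = l''.prod * s₂ * c₂ := by rw [hg, he₂, mul_assoc]
          have hnf₂' : d.nf (l''.prod * s₂) = (l''.take n₂ ++ tail₂) ++ [c₀₂] := by
            rw [List.append_assoc]; exact hnf₂
          have hnfgt : d.nf (g * t) = (l''.take n₂ ++ tail₂) ++ [c₀₂ * c₂] := by
            rw [hgt]; exact d.nf_mul_mem_C hnf₂' hc₂
          refine ⟨n₂, tail₂, c₀₂ * c₂, mul_mem hc₀₂ hc₂,
            le_trans hn₂ (by simp), htail₂, ?_, ?_⟩
          · rw [hnfgt, List.take_append_of_le_length hn₂, List.append_assoc]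
          · intro hn0 y hy
            cases l'' with
            | nil =>
              have hxy : x = y := by simpa using hy
              subst hxy
              refine Or.inl ⟨hxA, ?_⟩
              have hxg : x⁻¹ * (g * t) = c * t := by rw [hg]; simp
              exact hxg ▸ hctA
            | cons z l₃ =>
              have hzy : z = y := by simpa using hy
              subst hzy
              rcases hside₂ hn0 z (by simp) with ⟨hzA, hA⟩ | ⟨hzB, hB⟩
              · refine Or.inl ⟨hzA, ?_⟩
                have hzg : z⁻¹ * (g * t) = (z⁻¹ * ((z :: l₃).prod * s₂)) * c₂ := by
                  rw [hgt]; group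
                rw [hzg]; exact mul_mem hA (d.le_A hc₂)
              · refine Or.inr ⟨hzB, ?_⟩
                have hzg : z⁻¹ * (g * t) = (z⁻¹ * ((z :: l₃).prod * s₂)) * c₂ := by
                  rw [hgt]; group
                rw [hzg]; exact mul_mem hB (d.le_B hc₂)
      · have hxB : x ∈ d.SB := by
          rcases hxU with h | h
          · exact absurd h hxA
          · exact h
        by_cases hsB : s ∈ d.SB
        · obtain ⟨⟨u, c₃⟩, ⟨hu, hc₃, heu⟩, -⟩ :=
            d.transversal_B (x * s) (mul_mem (d.SB_subset hxB) (d.SB_subset hsB))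
          dsimp only at hu hc₃ heu
          have hxct : x * (c * t) = u * (c₃ * c') := by
            rw [hect, ← mul_assoc, heu, mul_assoc]
          by_cases hu1 : u = 1
          · subst hu1
            rw [one_mul] at hxct
            have hgt : g * t = l''.prod * (c₃ * c') := by rw [hg, hxct]
            have hnfgt : d.nf (g * t) = l'' ++ [c₃ * c'] :=
              d.nf_eq (mul_mem hc₃ hc') hmem'' hchain''
                (by rw [List.prod_append, List.prod_singleton, ← hgt])
            refine ⟨l''.length, [], c₃ * c', mul_mem hc₃ hc', by simp, Or.inl rfl,
              by rw [List.take_left]; simpa using hnfgt, ?_⟩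
            intro hn0 y hy
            have hl''nil : l'' = [] := List.length_eq_zero_iff.mp hn0
            subst hl''nil
            have hxy : x = y := by simpa using hy
            subst hxy
            refine Or.inr ⟨hxB, ?_⟩
            have hxg : x⁻¹ * (g * t) = c * t := by rw [hg]; simp
            rw [hxg, hect]
            exact mul_mem (d.SB_subset hsB) (d.le_B hc')
          · have huC : u ∉ C := d.swap.not_mem_C hu hu1
            obtain ⟨n₂, tail₂, c₀₂, hc₀₂, hn₂, htail₂, hnf₂, hside₂⟩ :=
              ih d.swap l''.prod l'' 1 hlen'' hnfl'' u hu huC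
            have hgt : g * t = (l''.prod * u) * (c₃ * c') := by
              rw [hg, hxct]; group
            have hnf₂' : d.nf (l''.prod * u) = (l''.take n₂ ++ tail₂) ++ [c₀₂] := by
              rw [List.append_assoc]; exact hnf₂
            have hnfgt : d.nf (g * t) = (l''.take n₂ ++ tail₂) ++ [c₀₂ * (c₃ * c')] := by
              rw [hgt]; exact d.nf_mul_mem_C hnf₂' (mul_mem hc₃ hc')
            refine ⟨n₂, tail₂, c₀₂ * (c₃ * c'), mul_mem hc₀₂ (mul_mem hc₃ hc'),
              le_trans hn₂ (by simp), htail₂, ?_, ?_⟩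
            · rw [hnfgt, List.take_append_of_le_length hn₂, List.append_assoc]
            · intro hn0 y hy
              cases l'' with
              | nil =>
                have hxy : x = y := by simpa using hy
                subst hxy
                refine Or.inr ⟨hxB, ?_⟩
                have hxg : x⁻¹ * (g * t) = c * t := by rw [hg]; simp
                rw [hxg, hect]
                exact mul_mem (d.SB_subset hsB) (d.le_B hc')
              | cons z l₃ =>
                have hzy : z = y := by simpa using hy
                subst hzy
                rcases hside₂ hn0 z (by simp) with ⟨hzB', hB⟩ | ⟨hzA', hA⟩
                · refine Or.inr ⟨hzB', ?_⟩
                  have hzg : z⁻¹ * (g * t) = (z⁻¹ * ((z :: l₃).prod * u)) * (c₃ * c') := by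
                    rw [hgt]; group
                  rw [hzg]; exact mul_mem hB (d.le_B (mul_mem hc₃ hc'))
                · refine Or.inl ⟨hzA', ?_⟩
                  have hzg : z⁻¹ * (g * t) = (z⁻¹ * ((z :: l₃).prod * u)) * (c₃ * c') := by
                    rw [hgt]; group
                  rw [hzg]; exact mul_mem hA (d.le_A (mul_mem hc₃ hc'))
        · have hnfgt : d.nf (g * t) = ((l'' ++ [x]) ++ [s]) ++ [c'] := by
            refine d.nf_eq hc' ?_ ?_ ?_
            · intro y hy
              rcases (by simpa using hy : y ∈ l'' ∨ y = x ∨ y = s) with h | rfl | rfl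
              · exact hmem y (by simp [h])
              · exact hmem y (by simp)
              · exact ⟨Set.mem_union_left _ hs, hs1⟩
            · refine List.IsChain.append hchain (List.isChain_singleton s) ?_
              intro p hp q hq
              rw [List.getLast?_concat] at hp
              have hpx : x = p := by simpa using hp
              have hqs : s = q := by simpa using hq
              subst hpx; subst hqs
              exact ⟨fun hc => hxA hc.1, fun hc => hsB hc.2⟩
            · rw [List.prod_append, List.prod_append, List.prod_singleton,
                List.prod_singleton, hg, hect]
              rw [List.prod_append, List.prod_singleton]
              group
          refine ⟨(l'' ++ [x]).length, [s], c', hc', le_refl _, Or.inr ⟨s, rfl⟩, ?_, ?_⟩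
          · rw [List.take_length, hnfgt]
            simp [List.append_assoc]
          · intro hn0
            exfalso
            simp at hn0

end Combinatorics

section KeyLemmas

variable {G : Type} [Group G] {A B C : Subgroup G}
  (d : AmalgamatedNormalFormData G A B C)

namespace AmalgamatedNormalFormData

lemma endsIn_of_Q {a₀ g : G} (ha₀ : a₀ ∈ d.SA) (ha₀1 : a₀ ≠ 1)
    (hQ : a₀⁻¹ * g ∈ C) : d.EndsIn g a₀ := by
  have hnf : d.nf g = [a₀] ++ [a₀⁻¹ * g] :=
    d.nf_eq hQ (by simpa using ⟨Or.inl ha₀, ha₀1⟩) (List.isChain_singleton _) (by simp)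
  show (d.nf g).head? = some a₀
  rw [hnf]
  rfl

lemma not_endsIn_of_mem_A {a₀ g : G} (ha₀ : a₀ ∈ d.SA) (ha₀1 : a₀ ≠ 1)
    (hg : g ∈ A) (hQ : a₀⁻¹ * g ∉ C) : ¬ d.EndsIn g a₀ := by
  intro hP
  rw [EndsIn] at hP
  obtain ⟨s, c, hs, hc, heq, hcase⟩ := d.nf_of_mem_A hg
  rcases hcase with ⟨-, hnf⟩ | ⟨hs1, hnf⟩
  · rw [hnf] at hP
    have hca : c = a₀ := by simpa using hP
    exact ha₀1 (d.eq_one_of_SA_of_C ha₀ (hca ▸ hc))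
  · rw [hnf] at hP
    have hsa : s = a₀ := by simpa using hP
    apply hQ
    have h2 : a₀⁻¹ * g = c := by rw [heq, ← hsa]; group
    rw [h2]; exact hc

lemma endsIn_iff_of_notQ {a₀ a g : G} (ha₀ : a₀ ∈ d.SA) (ha₀1 : a₀ ≠ 1)
    (ha : a ∈ d.SA) (ha1 : a ≠ 1)
    (hQg : a₀⁻¹ * g ∉ C) (hQga : a₀⁻¹ * (g * a) ∉ C) :
    d.EndsIn g a₀ ↔ d.EndsIn (g * a) a₀ := by
  have haC : a ∉ C := d.not_mem_C ha ha1
  have ha₀C : a₀ ∉ C := d.not_mem_C ha₀ ha₀1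
  constructor
  · intro hP
    rw [EndsIn] at hP
    obtain ⟨l₂, c, hsplit, hc, hm, hch⟩ := d.nf_normal g
    have hsplit' : d.nf g = l₂ ++ [c] := hsplit
    cases l₂ with
    | nil =>
      exfalso
      rw [hsplit'] at hP
      have : c = a₀ := by simpa using hP
      exact ha₀C (this ▸ hc)
    | cons y l₃ =>
      have hy : a₀ = y := by rw [hsplit'] at hP; exact (by simpa using hP : y = a₀).symm
      subst hy
      cases l₃ with
      | nil =>
        exfalso
        apply hQg
        have hp := d.nf_prod g
        rw [hsplit'] at hp
        have : a₀⁻¹ * g = c := by rw [← hp]; simp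
        rw [this]; exact hc
      | cons x r =>
        obtain ⟨hrel, -⟩ := List.isChain_cons_cons.mp hch
        have hxU := (hm x (by simp)).1
        have hxSB : x ∈ d.SB := by
          rcases hxU with h | h
          · exact absurd ⟨ha₀, h⟩ hrel.1
          · exact h
        have ha₀SB : a₀ ∉ d.SB := fun h => hrel.2 ⟨h, hxSB⟩
        have hgA : g ∉ A := by
          intro hgA
          obtain ⟨s', c', -, -, -, hcase⟩ := d.nf_of_mem_A hgA
          rcases hcase with ⟨-, hnf'⟩ | ⟨-, hnf'⟩
          · have := hnf'.symm.trans hsplit'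
            simp at this
          · have := hnf'.symm.trans hsplit'
            simp at this
        obtain ⟨n, tail, c₀, hc₀, hn, htail, hnfgt, hside⟩ :=
          mul_letter (a₀ :: x :: r).length d g (a₀ :: x :: r) c le_rfl hsplit' a ha haC
        cases n with
        | zero =>
          exfalso
          rcases hside rfl a₀ (by simp) with ⟨-, hA⟩ | ⟨hSB, -⟩
          · apply hgA
            have hge : g = a₀ * (a₀⁻¹ * (g * a)) * a⁻¹ := by group
            rw [hge]
            exact mul_mem (mul_mem (d.SA_subset ha₀) hA) (inv_mem (d.SA_subset ha))
          · exact ha₀SB hSB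
        | succ m =>
          show (d.nf (g * a)).head? = some a₀
          rw [hnfgt]
          simp
  · intro hPga
    by_contra hP
    obtain ⟨l₂, c, hsplit, hc, hm, hch⟩ := d.nf_normal g
    have hsplit' : d.nf g = l₂ ++ [c] := hsplit
    obtain ⟨n, tail, c₀, hc₀, hn, htail, hnfgt, hside⟩ :=
      mul_letter l₂.length d g l₂ c le_rfl hsplit' a ha haC
    rw [EndsIn, hnfgt] at hPga
    cases n with
    | zero =>
      rcases htail with rfl | ⟨s, rfl⟩
      · have : c₀ = a₀ := by simpa using hPga
        exact ha₀C (this ▸ hc₀)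
      · have hsa : s = a₀ := by simpa using hPga
        apply hQga
        have hprod := d.nf_prod (g * a)
        rw [hnfgt] at hprod
        have h2 : a₀⁻¹ * (g * a) = c₀ := by rw [← hprod, ← hsa]; simp
        rw [h2]; exact hc₀
    | succ m =>
      cases l₂ with
      | nil => exact absurd hn (by simp)
      | cons y l₃ =>
        have hya : y = a₀ := by simpa using hPga
        apply hP
        show (d.nf g).head? = some a₀
        rw [hsplit']
        simp [hya]

end AmalgamatedNormalFormData

end KeyLemmas

/-- Let `G = A ∗_C B` with fixed left transversals `S_A`, `S_B` both
containing `1`, let `a₀ ∈ S_A \\ {1}` and let `D` be the bounded operator on `ℓ²(G)` with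
`D δ_g = δ_{a₀⁻¹ g}` if the normal form of `g` ends in `a₀` and `D δ_g = 0` otherwise.
Then for every `a ∈ S_A \\ {1}`,
`D − R_{a⁻¹} D R_a = pr_C L_{a₀⁻¹} − R_{a⁻¹} pr_C L_{a₀⁻¹} R_a`,
where `pr_C` is the orthogonal projection onto the closed span of `{δ_c : c ∈ C}`. -/
theorem Da_commutator_eq_projC_commutator
    {G : Type} [Group G] [Countable G] (A B C : Subgroup G)
    (d : AmalgamatedNormalFormData G A B C)
    (a₀ : G) (ha₀ : a₀ ∈ d.SA) (ha₀1 : a₀ ≠ 1)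
    (D : L2 G →L[ℂ] L2 G)
    (hD1 : ∀ g : G, d.EndsIn g a₀ → D (delta g) = delta (a₀⁻¹ * g))
    (hD2 : ∀ g : G, ¬ d.EndsIn g a₀ → D (delta g) = 0)
    (a : G) (ha : a ∈ d.SA) (ha1 : a ≠ 1) :
    D - Rop a⁻¹ ∘L D ∘L Rop a =
      projC C ∘L Lop a₀⁻¹ - Rop a⁻¹ ∘L projC C ∘L Lop a₀⁻¹ ∘L Rop a := by
  have haC : a ∉ C := d.not_mem_C ha ha1
  have ha₀C : a₀ ∉ C := d.not_mem_C ha₀ ha₀1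
  apply ext_delta
  intro g
  simp only [ContinuousLinearMap.sub_apply, ContinuousLinearMap.comp_apply]
  rw [Rop_delta, Lop_delta, Lop_delta]
  by_cases hQg : a₀⁻¹ * g ∈ C <;> by_cases hQga : a₀⁻¹ * (g * a) ∈ C
  · exfalso
    apply haC
    have h2 : a = (a₀⁻¹ * g)⁻¹ * (a₀⁻¹ * (g * a)) := by group
    rw [h2]
    exact mul_mem (inv_mem hQg) hQga
  · have hgaA : g * a ∈ A := by
      have h2 : g * a = a₀ * (a₀⁻¹ * g) * a := by group
      rw [h2]
      exact mul_mem (mul_mem (d.SA_subset ha₀) (d.le_A hQg)) (d.SA_subset ha)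
    rw [hD1 g (d.endsIn_of_Q ha₀ ha₀1 hQg),
      hD2 (g * a) (d.not_endsIn_of_mem_A ha₀ ha₀1 hgaA hQga),
      projC_delta_mem hQg, projC_delta_not_mem hQga]
  · have hgA : g ∈ A := by
      have h2 : g = a₀ * (a₀⁻¹ * (g * a)) * a⁻¹ := by group
      rw [h2]
      exact mul_mem (mul_mem (d.SA_subset ha₀) (d.le_A hQga)) (inv_mem (d.SA_subset ha))
    rw [hD2 g (d.not_endsIn_of_mem_A ha₀ ha₀1 hgA hQg),
      hD1 (g * a) (d.endsIn_of_Q ha₀ ha₀1 hQga),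
      projC_delta_not_mem hQg, projC_delta_mem hQga]
  · have hiff := d.endsIn_iff_of_notQ ha₀ ha₀1 ha ha1 hQg hQga
    by_cases hP : d.EndsIn g a₀
    · rw [hD1 g hP, hD1 (g * a) (hiff.mp hP), projC_delta_not_mem hQg,
        projC_delta_not_mem hQga, map_zero, Rop_delta,
        show a₀⁻¹ * (g * a) * a⁻¹ = a₀⁻¹ * g by group, sub_self, sub_zero]
    · rw [hD2 g hP, hD2 (g * a) (fun hh => hP (hiff.mpr hh)),
        projC_delta_not_mem hQg, projC_delta_not_mem hQga]


end
end

section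
/- Let G be a countable group and A a subgroup of G. Let α : ℓ²(G) ⊗_ℂ ℓ²(G) → B(ℓ²(G)) be the injective ℂ-linear map determined by α(v ⊗ u)(x) = ⟨x, u*⟩ v, where u*(g) is the conjugate of u(g⁻¹). Then α maps the ℂ-subspace of ℓ²(G) ⊗_ℂ ℓ²(G) spanned by the elements R_a v ⊗ u − v ⊗ L_a u (for u, v ∈ ℓ²(G) and a ∈ A) bijectively onto F(ℓ²(G))·I_{ℂ[A]}. -/
noncomputable section

open ComplexConjugate
open scoped ENNReal

local notation "⟪" x ", " y "⟫" => @inner ℂ _ _ x y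

/-- The vector `u* ∈ ℓ²(G)`, `u*(g) = conj (u g⁻¹)`. -/
def starVec {G : Type} [Group G] (u : L2 G) : L2 G :=
  ⟨fun g => starRingEnd ℂ (u g⁻¹), by
    show Memℓp _ 2
    have h2 : (0:ℝ) < (2:ℝ≥0∞).toReal := by norm_num
    rw [memℓp_gen_iff h2]
    have h' : Summable fun g : G => ‖u g⁻¹‖ ^ (2:ℝ≥0∞).toReal :=
      ((Equiv.inv G).summable_iff
        (f := fun g : G => ‖u g‖ ^ (2:ℝ≥0∞).toReal)).2
        ((memℓp_gen_iff h2).1 (lp.memℓp u))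
    refine h'.congr fun g => ?_
    simp⟩

theorem starVec_apply {G : Type} [Group G] (u : L2 G) (g : G) :
    starVec u g = starRingEnd ℂ (u g⁻¹) := rfl

theorem starVec_add {G : Type} [Group G] (u v : L2 G) :
    starVec (u + v) = starVec u + starVec v := by
  apply Subtype.ext
  funext g
  simp only [lp.coeFn_add]
  show starRingEnd ℂ ((u + v) g⁻¹) = starRingEnd ℂ (u g⁻¹) + starRingEnd ℂ (v g⁻¹)
  rw [lp.coeFn_add]
  simp

theorem starVec_smul {G : Type} [Group G] (c : ℂ) (u : L2 G) :
    starVec (c • u) = starRingEnd ℂ c • starVec u := by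
  apply Subtype.ext
  funext g
  show starRingEnd ℂ ((c • u) g⁻¹) = (starRingEnd ℂ c • starVec u) g
  rw [lp.coeFn_smul, lp.coeFn_smul]
  simp [starVec_apply]

/-- The ℂ-linear map `α : ℓ²(G) ⊗_ℂ ℓ²(G) → B(ℓ²(G))` determined on elementary tensors
by `α(v ⊗ u)(x) = ⟨x, u*⟩ v`. -/
def alphaMap (G : Type) [Group G] :
    TensorProduct ℂ (L2 G) (L2 G) →ₗ[ℂ] (L2 G →L[ℂ] L2 G) :=
  TensorProduct.lift
    { toFun := fun v =>
        { toFun := fun u => (innerSL ℂ (starVec u)).smulRight v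
          map_add' := fun u u' => by
            ext x
            simp [starVec_add, inner_add_left, add_mul, lp.coeFn_add, lp.coeFn_smul, Pi.add_apply,
              Pi.smul_apply, smul_eq_mul] <;> rfl
          map_smul' := fun c u => by
            ext x
            simp [starVec_smul, inner_smul_left, mul_smul] }
      map_add' := fun v v' => by
        ext u x
        simp [smul_add]
      map_smul' := fun c v => by
        refine LinearMap.ext fun u => ?_
        refine ContinuousLinearMap.ext fun x => ?_
        show (inner ℂ (starVec u) x : ℂ) • (c • v) = c • ((inner ℂ (starVec u) x : ℂ) • v)
        exact smul_comm _ _ _ }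


/-! ### Auxiliary lemmas -/

theorem Rop_apply {G : Type} [Group G] (h : G) (x : L2 G) (g : G) :
    Rop h x g = x (g * h⁻¹) := rfl

theorem Lop_apply {G : Type} [Group G] (h : G) (x : L2 G) (g : G) :
    Lop h x g = x (h⁻¹ * g) := rfl

theorem Rop_inv_Rop {G : Type} [Group G] (a : G) (x : L2 G) :
    Rop a⁻¹ (Rop a x) = x := by
  apply Subtype.ext
  funext g
  show x (g * a⁻¹⁻¹ * a⁻¹) = x g
  rw [inv_inv, mul_inv_cancel_right]

theorem Rop_Rop_inv {G : Type} [Group G] (a : G) (x : L2 G) :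
    Rop a (Rop a⁻¹ x) = x := by
  have := Rop_inv_Rop a⁻¹ x
  rwa [inv_inv] at this

theorem inner_Rop_left {G : Type} [Group G] (a : G) (w x : L2 G) :
    ⟪Rop a w, x⟫ = ⟪w, Rop a⁻¹ x⟫ := by
  conv_lhs => rw [← Rop_Rop_inv a x]
  exact (lpShift (Equiv.mulRight a⁻¹)).toLinearIsometry.inner_map_map w (Rop a⁻¹ x)

theorem starVec_zero {G : Type} [Group G] : starVec (0 : L2 G) = 0 := by
  apply Subtype.ext
  funext g
  show starRingEnd ℂ ((0 : L2 G) g⁻¹) = (0 : L2 G) g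
  rw [lp.coeFn_zero]
  simp

theorem starVec_starVec {G : Type} [Group G] (u : L2 G) : starVec (starVec u) = u := by
  apply Subtype.ext
  funext g
  show starRingEnd ℂ (starVec u g⁻¹) = u g
  rw [starVec_apply]
  simp

theorem starVec_Lop {G : Type} [Group G] (a : G) (u : L2 G) :
    starVec (Lop a u) = Rop a⁻¹ (starVec u) := by
  apply Subtype.ext
  funext g
  show starRingEnd ℂ ((Lop a u) g⁻¹) = starVec u (g * a⁻¹⁻¹)
  rw [Lop_apply, starVec_apply]
  congr 2
  group

theorem alpha_tmul {G : Type} [Group G] (v u x : L2 G) :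
    alphaMap G (v ⊗ₜ[ℂ] u) x = ⟪starVec u, x⟫ • v := rfl

theorem opAct_alpha {G : Type} [Group G] (a : G) (v u : L2 G) :
    opAct (alphaMap G (v ⊗ₜ[ℂ] u)) a = alphaMap G ((Rop a v) ⊗ₜ[ℂ] (Lop a⁻¹ u)) := by
  refine ContinuousLinearMap.ext fun x => ?_
  show Rop a (alphaMap G (v ⊗ₜ[ℂ] u) (Rop a⁻¹ x)) = alphaMap G _ x
  rw [alpha_tmul, alpha_tmul, map_smul, starVec_Lop, inv_inv, inner_Rop_left]

theorem opAct_add {G : Type} [Group G] (T S : L2 G →L[ℂ] L2 G) (a : G) :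
    opAct (T + S) a = opAct T a + opAct S a := by
  refine ContinuousLinearMap.ext fun x => ?_
  simp [opAct]

theorem finiteRank_alpha_tmul {G : Type} [Group G] (v u : L2 G) :
    FiniteRank (alphaMap G (v ⊗ₜ[ℂ] u)) := by
  have h : LinearMap.range ((alphaMap G (v ⊗ₜ[ℂ] u) : L2 G →L[ℂ] L2 G) :
      L2 G →ₗ[ℂ] L2 G) ≤ Submodule.span ℂ {v} := by
    rintro y ⟨x, rfl⟩
    show alphaMap G (v ⊗ₜ[ℂ] u) x ∈ _
    rw [alpha_tmul]
    exact Submodule.smul_mem _ _ (Submodule.mem_span_singleton_self v)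
  haveI : FiniteDimensional ℂ (Submodule.span ℂ ({v} : Set (L2 G))) :=
    FiniteDimensional.span_of_finite ℂ (Set.finite_singleton v)
  exact Submodule.finiteDimensional_of_le h


theorem starVec_sum {G : Type} [Group G] {ι : Type*} (s : Finset ι) (f : ι → L2 G) :
    starVec (∑ i ∈ s, f i) = ∑ i ∈ s, starVec (f i) := by
  classical
  induction s using Finset.induction_on with
  | empty => simpa using starVec_zero
  | insert _ _ hi ih =>
    rw [Finset.sum_insert hi, Finset.sum_insert hi, starVec_add, ih]

/-- If `∑_{j ∈ t} ⟪w j, x⟫ • v j = 0` for every `x` and `w j₀` is not in the span of the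
other `w j`'s, then `v j₀ = 0`. -/
theorem key_aux {E : Type*} [NormedAddCommGroup E] [InnerProductSpace ℂ E] {ι : Type*}
    [DecidableEq ι] (t : Finset ι) (w v : ι → E)
    (h : ∀ x : E, ∑ j ∈ t, ⟪w j, x⟫ • v j = 0)
    (j₀ : ι) (hj₀ : j₀ ∈ t)
    (hsp : w j₀ ∉ Submodule.span ℂ (w '' ↑(t.erase j₀))) : v j₀ = 0 := by
  set K := Submodule.span ℂ (w '' ↑(t.erase j₀)) with hK
  haveI : FiniteDimensional ℂ K :=
    FiniteDimensional.span_of_finite ℂ ((t.erase j₀).finite_toSet.image w)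
  haveI : CompleteSpace K := FiniteDimensional.complete ℂ K
  set p : E := (K.orthogonalProjectionOnto (w j₀) : E) with hp
  have hpK : p ∈ K := (K.orthogonalProjectionOnto (w j₀)).2
  set x := w j₀ - p with hxdef
  have hxK : x ∈ Kᗮ := Submodule.sub_starProjection_mem_orthogonal (K := K) (w j₀)
  have hx0 : x ≠ 0 := by
    intro h0
    apply hsp
    have : w j₀ = p := by rwa [sub_eq_zero] at h0
    rw [this]
    exact hpK
  have h1 : ∀ j ∈ t.erase j₀, ⟪w j, x⟫ = (0 : ℂ) :=
    fun j hj => (Submodule.mem_orthogonal K x).mp hxK (w j)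
      (Submodule.subset_span (Set.mem_image_of_mem w hj))
  have h2 : ⟪w j₀, x⟫ = ⟪x, x⟫ := by
    have : w j₀ = x + p := by rw [hxdef]; abel
    rw [this, inner_add_left, (Submodule.mem_orthogonal K x).mp hxK p hpK, add_zero]
  have h3 := h x
  rw [Finset.sum_eq_single_of_mem j₀ hj₀ (fun j hj hne => by
    rw [h1 j (Finset.mem_erase.mpr ⟨hne, hj⟩), zero_smul])] at h3
  rcases smul_eq_zero.mp h3 with hc | hv
  · exact absurd (h2 ▸ hc) (inner_self_ne_zero.mpr hx0)
  · exact hv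

/-- Every element of the tensor product can be written as a finite sum `∑ v j ⊗ b j`
over basis vectors of the right factor. -/
theorem exists_decomp {G : Type} [Group G] (z : TensorProduct ℂ (L2 G) (L2 G)) :
    ∃ (t : Finset (Module.Basis.ofVectorSpaceIndex ℂ (L2 G)))
      (v : Module.Basis.ofVectorSpaceIndex ℂ (L2 G) → L2 G),
      z = ∑ j ∈ t, v j ⊗ₜ[ℂ] (Module.Basis.ofVectorSpace ℂ (L2 G)) j := by
  classical
  set b := Module.Basis.ofVectorSpace ℂ (L2 G) with hb
  induction z using TensorProduct.induction_on with
  | zero => exact ⟨∅, 0, by simp⟩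
  | tmul x u =>
    refine ⟨(b.repr u).support, fun j => b.repr u j • x, ?_⟩
    have hu : ∑ j ∈ (b.repr u).support, b.repr u j • b j = u := by
      conv_rhs => rw [← b.linearCombination_repr u]
      rw [Finsupp.linearCombination_apply, Finsupp.sum]
    calc x ⊗ₜ[ℂ] u = x ⊗ₜ[ℂ] (∑ j ∈ (b.repr u).support, b.repr u j • b j) := by rw [hu]
      _ = ∑ j ∈ (b.repr u).support, x ⊗ₜ[ℂ] (b.repr u j • b j) := TensorProduct.tmul_sum x _ _
      _ = ∑ j ∈ (b.repr u).support, (b.repr u j • x) ⊗ₜ[ℂ] b j := by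
          refine Finset.sum_congr rfl fun j _ => ?_
          rw [TensorProduct.smul_tmul]
  | add z₁ z₂ h₁ h₂ =>
    obtain ⟨t₁, v₁, rfl⟩ := h₁
    obtain ⟨t₂, v₂, rfl⟩ := h₂
    refine ⟨t₁ ∪ t₂, fun j => (if j ∈ t₁ then v₁ j else 0) + (if j ∈ t₂ then v₂ j else 0), ?_⟩
    have key : ∀ (t : Finset (Module.Basis.ofVectorSpaceIndex ℂ (L2 G)))
        (v : Module.Basis.ofVectorSpaceIndex ℂ (L2 G) → L2 G), t ⊆ t₁ ∪ t₂ →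
        ∑ j ∈ t₁ ∪ t₂, (if j ∈ t then v j else 0) ⊗ₜ[ℂ] b j = ∑ j ∈ t, v j ⊗ₜ[ℂ] b j := by
      intro t v ht
      rw [← Finset.sum_subset ht (fun j _ hj => by rw [if_neg hj, TensorProduct.zero_tmul])]
      exact Finset.sum_congr rfl fun j hj => by rw [if_pos hj]
    simp_rw [TensorProduct.add_tmul]
    rw [Finset.sum_add_distrib, key t₁ v₁ Finset.subset_union_left,
      key t₂ v₂ Finset.subset_union_right]

theorem alpha_injective (G : Type) [Group G] : Function.Injective (alphaMap G) := by
  classical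
  rw [← LinearMap.ker_eq_bot, LinearMap.ker_eq_bot']
  intro z hz
  set b := Module.Basis.ofVectorSpace ℂ (L2 G) with hb
  obtain ⟨t, v, rfl⟩ := exists_decomp z
  have hv : ∀ j ∈ t, v j = 0 := by
    intro j hj
    refine key_aux t (fun j => starVec (b j)) v (fun x => ?_) j hj ?_
    · have h0 : (alphaMap G (∑ j ∈ t, v j ⊗ₜ[ℂ] b j)) x = 0 := by rw [hz]; rfl
      rw [map_sum, ContinuousLinearMap.sum_apply] at h0
      simpa [alpha_tmul] using h0
    · intro hmem
      rw [Finsupp.mem_span_image_iff_linearCombination] at hmem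
      obtain ⟨l, hl, hlx⟩ := hmem
      have hnotmem : j ∉ (↑(t.erase j) : Set (Module.Basis.ofVectorSpaceIndex ℂ (L2 G))) := by
        simp
      refine b.linearIndependent.notMem_span_image hnotmem ?_
      have h2 := congrArg starVec hlx
      rw [starVec_starVec, Finsupp.linearCombination_apply, Finsupp.sum,
        starVec_sum] at h2
      have h3 : ∀ i ∈ l.support, starVec (l i • starVec (b i)) = starRingEnd ℂ (l i) • b i :=
        fun i _ => by rw [starVec_smul, starVec_starVec]
      rw [Finset.sum_congr rfl h3] at h2
      rw [← h2]
      refine Submodule.sum_mem _ fun i hi => Submodule.smul_mem _ _ (Submodule.subset_span ?_)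
      exact Set.mem_image_of_mem b ((Finsupp.mem_supported ℂ l).mp hl hi)
  have : ∑ j ∈ t, v j ⊗ₜ[ℂ] b j = ∑ j ∈ t, (0 : L2 G) ⊗ₜ[ℂ] b j :=
    Finset.sum_congr rfl fun j hj => by rw [hv j hj]
  rw [this]
  simp


/-- Every finite rank operator is in the range of `alphaMap`. -/
theorem alpha_surj_finiteRank {G : Type} [Group G] (T : L2 G →L[ℂ] L2 G)
    (hT : FiniteRank T) : ∃ z, alphaMap G z = T := by
  haveI : FiniteDimensional ℂ ↥(LinearMap.range (T : L2 G →ₗ[ℂ] L2 G)) := hT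
  set W := LinearMap.range ((T : L2 G →L[ℂ] L2 G) : L2 G →ₗ[ℂ] L2 G) with hW
  let b : Module.Basis (Fin (Module.finrank ℂ W)) ℂ W := Module.finBasis ℂ W
  let T' : L2 G →L[ℂ] W := T.codRestrict W (fun x => LinearMap.mem_range_self _ x)
  let c : Fin (Module.finrank ℂ W) → (W →L[ℂ] ℂ) := fun i =>
    LinearMap.toContinuousLinearMap
      ((Finsupp.lapply i) ∘ₗ (b.repr : W →ₗ[ℂ] (Fin (Module.finrank ℂ W) →₀ ℂ)))
  let y : Fin (Module.finrank ℂ W) → L2 G := fun i =>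
    (InnerProductSpace.toDual ℂ (L2 G)).symm ((c i).comp T')
  refine ⟨∑ i, ((b i : L2 G) ⊗ₜ[ℂ] starVec (y i)), ?_⟩
  refine ContinuousLinearMap.ext fun x => ?_
  rw [map_sum, ContinuousLinearMap.sum_apply]
  have hx : ∀ i, alphaMap G ((b i : L2 G) ⊗ₜ[ℂ] starVec (y i)) x
      = ((b.repr (T' x) i • b i : W) : L2 G) := by
    intro i
    rw [alpha_tmul, starVec_starVec]
    have : ⟪y i, x⟫ = b.repr (T' x) i :=
      InnerProductSpace.toDual_symm_apply
    rw [this]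
    rfl
  rw [Finset.sum_congr rfl fun i _ => hx i, ← Submodule.coe_sum, b.sum_repr (T' x)]
  rfl

/-- Let `A` be a subgroup of a countable group `G` and let
`α : ℓ²(G) ⊗_ℂ ℓ²(G) → B(ℓ²(G))` be the injective linear map with
`α(v ⊗ u)(x) = ⟨x, u*⟩ v`.  Then `α` maps the subspace spanned by the elements
`R_a v ⊗ u − v ⊗ L_a u` (for `u, v ∈ ℓ²(G)`, `a ∈ A`) bijectively onto
`F(ℓ²(G))·I_{ℂ[A]}`. -/
theorem alphaMap_span_eq_fideal (G : Type) [Group G] [Countable G] (A : Subgroup G) :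
    Function.Injective (alphaMap G) ∧
      Submodule.map (alphaMap G)
        (Submodule.span ℂ
          {z : TensorProduct ℂ (L2 G) (L2 G) |
            ∃ (u v : L2 G) (a : G), a ∈ A ∧
              z = TensorProduct.tmul ℂ (Rop a v) u - TensorProduct.tmul ℂ v (Lop a u)}) =
        FIdeal A := by
  classical
  refine ⟨alpha_injective G, le_antisymm ?_ ?_⟩
  · rw [Submodule.map_span]
    refine Submodule.span_le.mpr ?_
    rintro _ ⟨z, ⟨u, v, a, ha, rfl⟩, rfl⟩
    have hrw : alphaMap G ((Rop a v) ⊗ₜ[ℂ] u - v ⊗ₜ[ℂ] (Lop a u))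
        = alphaMap G ((Rop a v) ⊗ₜ[ℂ] u) - opAct (alphaMap G ((Rop a v) ⊗ₜ[ℂ] u)) a⁻¹ := by
      rw [map_sub, opAct_alpha, Rop_inv_Rop, inv_inv]
    rw [hrw]
    exact Submodule.subset_span
      ⟨alphaMap G ((Rop a v) ⊗ₜ[ℂ] u), a⁻¹, finiteRank_alpha_tmul _ _, A.inv_mem ha, rfl⟩
  · unfold FIdeal
    refine Submodule.span_le.mpr ?_
    rintro _ ⟨T, h, hT, hA, rfl⟩
    obtain ⟨z, hz⟩ := alpha_surj_finiteRank T hT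
    rw [← hz]
    clear hz hT
    induction z using TensorProduct.induction_on with
    | zero =>
      have h0 : opAct (alphaMap G (0 : TensorProduct ℂ (L2 G) (L2 G))) h = 0 := by
        rw [map_zero]
        refine ContinuousLinearMap.ext fun x => ?_
        simp [opAct]
      rw [h0, map_zero, sub_zero]
      exact Submodule.zero_mem _
    | tmul v u =>
      rw [opAct_alpha, ← map_sub]
      refine Submodule.mem_map_of_mem (Submodule.subset_span ?_)
      exact ⟨u, Rop h v, h⁻¹, A.inv_mem hA, by rw [Rop_inv_Rop]⟩
    | add z₁ z₂ h₁ h₂ =>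
      rw [map_add, opAct_add, add_sub_add_comm]
      exact Submodule.add_mem _ h₁ h₂

end
end

section
/- Let R be a von Neumann regular unital ring (i.e. for every x ∈ R there exists y ∈ R with xyx = x), and let dim be a Sylvester module rank function on R that is faithful over finitely generated projective left R-modules, meaning that dim(P) = 0 implies P = 0 for every finitely generated projective left R-module P. Then every map α : P → Q between finitely generated projective left R-modules that is full with respect to dim is an isomorphism. -/
noncomputable section

/-- A Sylvester module rank function on a unital ring `R`: an isomorphism-invariant
assignment of a non-negative real number to every (finitely presented) left `R`-module
such that `dim 0 = 0`, `dim R = 1`, `dim` is additive on direct sums, and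
`dim M₁ + dim M₃ ≥ dim M₂ ≥ dim M₃` whenever `M₁ → M₂ → M₃ → 0` is exact. -/
structure SylvesterModuleRankFunction (R : Type) [Ring R] : Type 1 where
  dim : (M : Type) → [AddCommGroup M] → [Module R M] → ℝ
  dim_nonneg : ∀ (M : Type) [AddCommGroup M] [Module R M],
    Module.FinitePresentation R M → 0 ≤ dim M
  dim_congr : ∀ (M N : Type) [AddCommGroup M] [Module R M] [AddCommGroup N] [Module R N],
    Module.FinitePresentation R M → (M ≃ₗ[R] N) → dim M = dim N
  dim_zero : dim PUnit = 0
  dim_self : dim R = 1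
  dim_prod : ∀ (M N : Type) [AddCommGroup M] [Module R M] [AddCommGroup N] [Module R N],
    Module.FinitePresentation R M → Module.FinitePresentation R N →
      dim (M × N) = dim M + dim N
  dim_exact : ∀ (M₁ M₂ M₃ : Type) [AddCommGroup M₁] [Module R M₁]
    [AddCommGroup M₂] [Module R M₂] [AddCommGroup M₃] [Module R M₃],
    Module.FinitePresentation R M₁ → Module.FinitePresentation R M₂ →
    Module.FinitePresentation R M₃ →
    ∀ (f : M₁ →ₗ[R] M₂) (g : M₂ →ₗ[R] M₃), Function.Surjective g →
      LinearMap.range f = LinearMap.ker g →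
      dim M₂ ≤ dim M₁ + dim M₃ ∧ dim M₃ ≤ dim M₂

/-- The rank `dim(α)` of a map `α : P → Q` of modules with respect to a Sylvester module
rank function: the infimum of `dim P'` over all finitely generated projective left
`R`-modules `P'` through which `α` factors. -/
def SylvesterModuleRankFunction.dimMap {R : Type} [Ring R]
    (d : SylvesterModuleRankFunction R)
    {P Q : Type} [AddCommGroup P] [Module R P] [AddCommGroup Q] [Module R Q]
    (α : P →ₗ[R] Q) : ℝ :=
  sInf {x : ℝ | ∃ P' : ModuleCat.{0} R,
    Module.Finite R P' ∧ Module.Projective R P' ∧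
      (∃ (β : P →ₗ[R] P') (γ : P' →ₗ[R] Q), γ.comp β = α) ∧ d.dim P' = x}

/-- `α` is a full map with respect to `d`: `dim P = dim α = dim Q`. -/
def SylvesterModuleRankFunction.IsFull {R : Type} [Ring R]
    (d : SylvesterModuleRankFunction R)
    {P Q : Type} [AddCommGroup P] [Module R P] [AddCommGroup Q] [Module R Q]
    (α : P →ₗ[R] Q) : Prop :=
  d.dim P = d.dimMap α ∧ d.dimMap α = d.dim Q


section VonNeumannAux

variable {R : Type} [Ring R]

lemma mem_span_self_mul (r x : R) : r * x ∈ Submodule.span R ({x} : Set R) :=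
  Submodule.mem_span_singleton.2 ⟨r, rfl⟩





lemma vnr_sup_span_idem (hreg : ∀ x : R, ∃ y : R, x * y * x = x)
    (e : R) (he : IsIdempotentElem e) (a : R) :
    ∃ g : R, IsIdempotentElem g ∧
      Submodule.span R {e} ⊔ Submodule.span R {a} = Submodule.span R {g} := by
  set a' := a - a * e with ha'
  have hsup : Submodule.span R ({e} : Set R) ⊔ Submodule.span R {a}
      = Submodule.span R ({e} : Set R) ⊔ Submodule.span R {a'} := by
    apply le_antisymm
    · refine sup_le le_sup_left ?_
      rw [Submodule.span_singleton_le_iff_mem]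
      have : a = a' + a * e := by rw [ha']; abel
      rw [this]
      exact Submodule.add_mem _
        (Submodule.mem_sup_right (Submodule.mem_span_singleton_self _))
        (Submodule.mem_sup_left (mem_span_self_mul a e))
    · refine sup_le le_sup_left ?_
      rw [Submodule.span_singleton_le_iff_mem, ha']
      exact Submodule.sub_mem _
        (Submodule.mem_sup_right (Submodule.mem_span_singleton_self _))
        (Submodule.mem_sup_left (mem_span_self_mul a e))
  obtain ⟨y, hy⟩ := hreg a'
  set g := y * a' with hgdef
  have hgidem : IsIdempotentElem g := by
    show g * g = g
    rw [hgdef, mul_assoc, ← mul_assoc a' y a', hy]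
  have ha'e : a' * e = 0 := by rw [ha', sub_mul, mul_assoc, he.eq, sub_self]
  have hge : g * e = 0 := by rw [hgdef, mul_assoc, ha'e, mul_zero]
  have hspan : Submodule.span R ({a'} : Set R) = Submodule.span R {g} := by
    apply le_antisymm <;> rw [Submodule.span_singleton_le_iff_mem]
    · have : a' = a' * g := by rw [hgdef, ← mul_assoc, hy]
      rw [this]; exact mem_span_self_mul _ _
    · rw [hgdef]; exact mem_span_self_mul _ _
  set h := e + g - e * g with hhdef
  have aux1 : ∀ x : R, e * (e * x) = e * x := fun x => by rw [← mul_assoc, he.eq]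
  have aux2 : g * (e * g) = 0 := by rw [← mul_assoc, hge, zero_mul]
  have hhidem : IsIdempotentElem h := by
    show h * h = h
    rw [hhdef]
    simp only [mul_add, add_mul, mul_sub, sub_mul, mul_assoc, he.eq, hgidem.eq, hge, aux1, aux2,
      mul_zero, zero_mul]
    abel
  refine ⟨h, hhidem, ?_⟩
  rw [hsup, hspan]
  apply le_antisymm
  · refine sup_le ?_ ?_ <;> rw [Submodule.span_singleton_le_iff_mem]
    · have : e = e * h := by
        rw [hhdef]
        simp only [mul_add, mul_sub, ← mul_assoc, he.eq]
        abel
      rw [this]; exact mem_span_self_mul _ _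
    · have : g = g * h := by
        rw [hhdef]
        simp only [mul_add, mul_sub, ← mul_assoc, hgidem.eq, hge, zero_mul, mul_zero]
        abel
      rw [this]; exact mem_span_self_mul _ _
  · rw [Submodule.span_singleton_le_iff_mem, hhdef]
    refine Submodule.sub_mem _ (Submodule.add_mem _
      (Submodule.mem_sup_left (Submodule.mem_span_singleton_self _))
      (Submodule.mem_sup_right (Submodule.mem_span_singleton_self _)))
      (Submodule.mem_sup_right (mem_span_self_mul e g))


lemma vnr_fg_ideal_idem (hreg : ∀ x : R, ∃ y : R, x * y * x = x)
    (N : Submodule R R) (hN : N.FG) :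
    ∃ e : R, IsIdempotentElem e ∧ N = Submodule.span R {e} := by
  classical
  obtain ⟨S, hS⟩ := hN
  induction S using Finset.induction generalizing N with
  | empty =>
    refine ⟨0, by simp [IsIdempotentElem], ?_⟩
    rw [← hS]; simp only [Finset.coe_empty, Submodule.span_empty, Submodule.span_zero_singleton]
  | @insert a S ha IH =>
    obtain ⟨f, hf, hfspan⟩ := IH (Submodule.span R (S : Set R)) rfl
    obtain ⟨g, hg, hgspan⟩ := vnr_sup_span_idem hreg f hf a
    refine ⟨g, hg, ?_⟩
    rw [← hS]
    push_cast
    rw [Submodule.span_insert, ← hgspan, hfspan, sup_comm]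

/-- predicate: every fg submodule is the range of a projection -/
def GoodMod (R : Type) [Ring R] (M : Type) [AddCommGroup M] [Module R M] : Prop :=
  ∀ N : Submodule R M, N.FG → ∃ π : M →ₗ[R] M, LinearMap.IsProj N π

lemma goodMod_self (hreg : ∀ x : R, ∃ y : R, x * y * x = x) : GoodMod R R := by
  intro N hN
  obtain ⟨e, he, rfl⟩ := vnr_fg_ideal_idem hreg N hN
  refine ⟨LinearMap.toSpanSingleton R R e, ?_, ?_⟩
  · intro x
    exact mem_span_self_mul x e
  · intro x hx
    obtain ⟨r, rfl⟩ := Submodule.mem_span_singleton.1 hx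
    show (r • e) • e = r • e
    simp only [smul_eq_mul, mul_assoc, he.eq]

lemma goodMod_of_retract {M M' : Type} [AddCommGroup M] [Module R M] [AddCommGroup M']
    [Module R M'] (i : M →ₗ[R] M') (r : M' →ₗ[R] M) (hri : r.comp i = LinearMap.id)
    (hM' : GoodMod R M') : GoodMod R M := by
  intro N hN
  obtain ⟨π₀, hπ₀⟩ := hM' (N.map i) (hN.map i)
  refine ⟨r ∘ₗ π₀ ∘ₗ i, ?_, ?_⟩
  · intro x
    have h1 : π₀ (i x) ∈ N.map i := hπ₀.map_mem (i x)
    obtain ⟨n, hn, hn'⟩ := h1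
    show r (π₀ (i x)) ∈ N
    rw [← hn']
    have : r (i n) = n := by
      have := congrArg (fun f : M →ₗ[R] M => f n) hri
      simpa using this
    rw [this]; exact hn
  · intro x hx
    have h1 : i x ∈ N.map i := ⟨x, hx, rfl⟩
    show r (π₀ (i x)) = x
    rw [hπ₀.map_id _ h1]
    have := congrArg (fun f : M →ₗ[R] M => f x) hri
    simpa using this




lemma goodMod_prod (hreg : ∀ x : R, ∃ y : R, x * y * x = x)
    {M : Type} [AddCommGroup M] [Module R M] (hM : GoodMod R M) : GoodMod R (M × R) := by
  intro N hN
  obtain ⟨e, he, hI⟩ := vnr_fg_ideal_idem hreg (N.map (LinearMap.snd R M R)) (hN.map _)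
  have heI : e ∈ N.map (LinearMap.snd R M R) := by
    rw [hI]; exact Submodule.mem_span_singleton_self e
  obtain ⟨n₀, hn₀N, hn₀⟩ := heI
  have hn₀' : n₀.2 = e := hn₀
  -- σ x = (x.2 * e) • n₀
  set σ : (M × R) →ₗ[R] (M × R) :=
    (LinearMap.toSpanSingleton R (M × R) n₀) ∘ₗ
      (LinearMap.toSpanSingleton R R e) ∘ₗ (LinearMap.snd R M R) with hσdef
  have hσ_apply : ∀ x : M × R, σ x = (x.2 * e) • n₀ := fun x => rfl
  have hσN : ∀ x : M × R, σ x ∈ N := fun x => by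
    rw [hσ_apply]; exact Submodule.smul_mem _ _ hn₀N
  have hmul : ∀ n ∈ N, n.2 * e = n.2 := by
    intro n hn
    have : n.2 ∈ N.map (LinearMap.snd R M R) := ⟨n, hn, rfl⟩
    rw [hI] at this
    obtain ⟨r, hr⟩ := Submodule.mem_span_singleton.1 this
    rw [← hr]; show r * e * e = r * e; rw [mul_assoc, he.eq]
  have hsndσ : ∀ x : M × R, (σ x).2 = x.2 * e := by
    intro x; rw [hσ_apply]
    show (x.2 * e) * n₀.2 = x.2 * e
    rw [hn₀', mul_assoc, he.eq]
  set K : Submodule R (M × R) := N.map ((LinearMap.id : (M × R) →ₗ[R] (M × R)) - σ) with hKdef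
  have hKfg : K.FG := hN.map _
  have hKsnd : ∀ k ∈ K, k.2 = 0 := by
    rintro k ⟨n, hn, rfl⟩
    show (((LinearMap.id : (M × R) →ₗ[R] (M × R)) - σ) n).2 = 0
    rw [LinearMap.sub_apply, LinearMap.id_apply, Prod.snd_sub, hsndσ, hmul n hn, sub_self]
  have hKN : K ≤ N := by
    rintro k ⟨n, hn, rfl⟩
    rw [LinearMap.sub_apply, LinearMap.id_apply]
    exact Submodule.sub_mem _ hn (hσN n)
  obtain ⟨q₀, hq₀⟩ := hM (K.map (LinearMap.fst R M R)) (hKfg.map _)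
  have hinl : ∀ m ∈ K.map (LinearMap.fst R M R), ((m, 0) : M × R) ∈ N := by
    rintro m ⟨k, hk, rfl⟩
    show ((k.1, 0) : M × R) ∈ N
    have : ((k.1, 0) : M × R) = k := by
      ext
      · rfl
      · rw [hKsnd k hk]
    rw [this]; exact hKN hk
  set π : (M × R) →ₗ[R] (M × R) :=
    (LinearMap.inl R M R) ∘ₗ q₀ ∘ₗ (LinearMap.fst R M R) ∘ₗ ((LinearMap.id : (M × R) →ₗ[R] (M × R)) - σ) + σ with hπdef
  refine ⟨π, ?_, ?_⟩
  · intro x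
    have h1 : q₀ ((x - σ x).1) ∈ K.map (LinearMap.fst R M R) := hq₀.map_mem _
    have : π x = (q₀ ((x - σ x).1), 0) + σ x := rfl
    rw [this]
    exact Submodule.add_mem _ (hinl _ h1) (hσN x)
  · intro n hn
    have hkK : n - σ n ∈ K := ⟨n, hn, rfl⟩
    have h2 : (n - σ n).1 ∈ K.map (LinearMap.fst R M R) := ⟨n - σ n, hkK, rfl⟩
    have : π n = (q₀ ((n - σ n).1), 0) + σ n := rfl
    rw [this, hq₀.map_id _ h2]
    have h3 : (((n - σ n).1, 0) : M × R) = n - σ n := by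
      ext
      · rfl
      · rw [hKsnd _ hkK]
    rw [h3, sub_add_cancel]




lemma goodMod_pi (hreg : ∀ x : R, ∃ y : R, x * y * x = x) (n : ℕ) :
    GoodMod R (Fin n → R) := by
  induction n with
  | zero =>
    intro N _
    refine ⟨LinearMap.id, fun x => ?_, fun x _ => rfl⟩
    have : (x : Fin 0 → R) = 0 := Subsingleton.elim _ _
    rw [LinearMap.id_apply, this]
    exact N.zero_mem
  | succ n IH =>
    set i : (Fin (n + 1) → R) →ₗ[R] ((Fin n → R) × R) :=
      LinearMap.prod (LinearMap.funLeft R R Fin.castSucc) (LinearMap.proj (Fin.last n))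
    set r : ((Fin n → R) × R) →ₗ[R] (Fin (n + 1) → R) :=
      LinearMap.pi (fun j => Fin.lastCases (LinearMap.snd R (Fin n → R) R)
        (fun k => (LinearMap.proj k).comp (LinearMap.fst R (Fin n → R) R)) j)
    have hri : r.comp i = LinearMap.id := by
      ext x j
      refine Fin.lastCases ?_ (fun k => ?_) j
      · simp [r, i, Fin.lastCases_last]
      · simp [r, i, Fin.lastCases_castSucc]
    exact goodMod_of_retract i r hri (goodMod_prod hreg IH)

lemma goodMod_of_fg_projective (hreg : ∀ x : R, ∃ y : R, x * y * x = x)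
    (M : Type) [AddCommGroup M] [Module R M] [Module.Finite R M] [Module.Projective R M] :
    GoodMod R M := by
  obtain ⟨n, f, hf⟩ := Module.Finite.exists_fin' R M
  obtain ⟨s, hs⟩ := Module.projective_lifting_property f LinearMap.id hf
  exact goodMod_of_retract s f hs (goodMod_pi hreg n)

end VonNeumannAux

lemma aux_fin_proj {R : Type} [Ring R] {M : Type} [AddCommGroup M] [Module R M]
    [Module.Finite R M] [Module.Projective R M] {p : Submodule R M} {f : M →ₗ[R] M}
    (h : LinearMap.IsProj p f) : Module.Finite R p ∧ Module.Projective R p := by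
  have hsurj : Function.Surjective h.codRestrict :=
    fun y => ⟨(y : M), h.codRestrict_apply_cod y⟩
  refine ⟨Module.Finite.of_surjective h.codRestrict hsurj, ?_⟩
  refine Module.Projective.of_split p.subtype h.codRestrict ?_
  ext x
  exact congrArg Subtype.val (h.codRestrict_apply_cod x)

/-- Let `R` be a von Neumann regular unital ring and `dim` a Sylvester
module rank function on `R` that is faithful over finitely generated projective left
`R`-modules (`dim P = 0` implies `P = 0`).  Then every full map `α : P → Q` between
finitely generated projective left `R`-modules is an isomorphism. -/
theorem full_map_bijective_of_vonNeumannRegular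
    (R : Type) [Ring R] (hreg : ∀ x : R, ∃ y : R, x * y * x = x)
    (d : SylvesterModuleRankFunction R)
    (hfaithful : ∀ (P : Type) [AddCommGroup P] [Module R P],
      Module.Finite R P → Module.Projective R P → d.dim P = 0 → Subsingleton P)
    (P Q : Type) [AddCommGroup P] [Module R P] [AddCommGroup Q] [Module R Q]
    (hPfg : Module.Finite R P) (hPproj : Module.Projective R P)
    (hQfg : Module.Finite R Q) (hQproj : Module.Projective R Q)
    (α : P →ₗ[R] Q) (hα : d.IsFull α) :
    Function.Bijective α := by
  haveI := hPfg; haveI := hPproj; haveI := hQfg; haveI := hQproj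
  set N := LinearMap.range α with hNdef
  have hNfg : N.FG := by
    have h1 : (⊤ : Submodule R P).FG := Module.finite_def.mp hPfg
    have := h1.map α
    rwa [Submodule.map_top] at this
  obtain ⟨π, hπ⟩ := goodMod_of_fg_projective hreg Q N hNfg
  obtain ⟨hNfin, hNproj⟩ := aux_fin_proj hπ
  haveI := hNfin; haveI := hNproj
  -- split α through N
  obtain ⟨s, hs⟩ := Module.projective_lifting_property α.rangeRestrict LinearMap.id
    α.surjective_rangeRestrict
  have hsid : ∀ y : N, α.rangeRestrict (s y) = y := fun y => by
    have := congrArg (fun f : N →ₗ[R] N => f y) hs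
    exact this
  set E : P →ₗ[R] P := s ∘ₗ α.rangeRestrict with hEdef
  have hα_eq : ∀ x : P, (α.rangeRestrict x : Q) = α x := fun x => rfl
  have hproj1 : LinearMap.IsProj (LinearMap.ker α) (LinearMap.id - E) := by
    constructor
    · intro x
      rw [LinearMap.mem_ker]
      show α (x - E x) = 0
      have h0 : α.rangeRestrict (x - E x) = 0 := by
        rw [map_sub]
        show α.rangeRestrict x - α.rangeRestrict (s (α.rangeRestrict x)) = 0
        rw [hsid, sub_self]
      calc α (x - E x) = ((α.rangeRestrict (x - E x) : LinearMap.range α) : Q) := rfl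
      _ = 0 := by rw [h0]; rfl
    · intro x hx
      have h0 : α.rangeRestrict x = 0 := Subtype.ext (by rw [hα_eq]; exact hx)
      show x - E x = x
      show x - s (α.rangeRestrict x) = x
      rw [h0, map_zero, sub_zero]
  have hproj2 : LinearMap.IsProj (LinearMap.ker ((LinearMap.id : P →ₗ[R] P) - E)) E := by
    constructor
    · intro x
      rw [LinearMap.mem_ker]
      show E x - E (E x) = 0
      rw [sub_eq_zero, hEdef]
      show s (α.rangeRestrict x) = s (α.rangeRestrict (s (α.rangeRestrict x)))
      rw [hsid]
    · intro x hx
      rw [LinearMap.mem_ker] at hx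
      have : x - E x = 0 := hx
      rw [sub_eq_zero] at this
      exact this.symm
  have hproj3 : LinearMap.IsProj (LinearMap.ker π) ((LinearMap.id : Q →ₗ[R] Q) - π) := by
    constructor
    · intro x
      rw [LinearMap.mem_ker]
      show π (x - π x) = 0
      rw [map_sub, sub_eq_zero, hπ.map_id _ (hπ.map_mem x)]
    · intro x hx
      rw [LinearMap.mem_ker] at hx
      show x - π x = x
      rw [hx, sub_zero]
  obtain ⟨hfin1, hprj1⟩ := aux_fin_proj hproj1
  obtain ⟨hfin2, hprj2⟩ := aux_fin_proj hproj2
  obtain ⟨hfin3, hprj3⟩ := aux_fin_proj hproj3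
  haveI := hfin1; haveI := hprj1; haveI := hfin2; haveI := hprj2
  haveI := hfin3; haveI := hprj3
  have fpP : Module.FinitePresentation R P := Module.finitePresentation_of_projective R P
  have fpQ : Module.FinitePresentation R Q := Module.finitePresentation_of_projective R Q
  have fpN : Module.FinitePresentation R N := Module.finitePresentation_of_projective R N
  have fp1 : Module.FinitePresentation R (LinearMap.ker α) :=
    Module.finitePresentation_of_projective R _
  have fp2 : Module.FinitePresentation R (LinearMap.ker ((LinearMap.id : P →ₗ[R] P) - E)) :=
    Module.finitePresentation_of_projective R _
  have fp3 : Module.FinitePresentation R (LinearMap.ker π) :=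
    Module.finitePresentation_of_projective R _
  -- equivalences
  have equiv1 := Submodule.prodEquivOfIsCompl _ _ hproj1.isCompl
  have equiv2 := Submodule.prodEquivOfIsCompl _ _ hπ.isCompl
  have hsmem : ∀ y : N, s y ∈ LinearMap.ker ((LinearMap.id : P →ₗ[R] P) - E) := by
    intro y
    rw [LinearMap.mem_ker]
    show s y - E (s y) = 0
    rw [sub_eq_zero]
    show s y = s (α.rangeRestrict (s y))
    rw [hsid]
  have equiv3 : (LinearMap.ker ((LinearMap.id : P →ₗ[R] P) - E)) ≃ₗ[R] N := by
    refine LinearEquiv.ofLinear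
      (α.rangeRestrict ∘ₗ (LinearMap.ker ((LinearMap.id : P →ₗ[R] P) - E)).subtype)
      (LinearMap.codRestrict _ s hsmem) ?_ ?_
    · ext y
      exact congrArg Subtype.val (hsid y)
    · ext x
      show s (α.rangeRestrict (x : P)) = (x : P)
      have hx : (x : P) - E (x : P) = 0 := x.2
      rw [sub_eq_zero] at hx
      exact hx.symm
  -- dimension identities
  have hdP : d.dim P = d.dim (LinearMap.ker α)
      + d.dim (LinearMap.ker ((LinearMap.id : P →ₗ[R] P) - E)) := by
    rw [d.dim_congr P _ fpP equiv1.symm, d.dim_prod _ _ fp1 fp2]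
  have hdke : d.dim (LinearMap.ker ((LinearMap.id : P →ₗ[R] P) - E)) = d.dim N :=
    d.dim_congr _ _ fp2 equiv3
  have hdQ : d.dim Q = d.dim N + d.dim (LinearMap.ker π) := by
    rw [d.dim_congr Q _ fpQ equiv2.symm, d.dim_prod _ _ fpN fp3]
  -- the infimum bound
  have hbdd : BddBelow {x : ℝ | ∃ P' : ModuleCat.{0} R,
      Module.Finite R P' ∧ Module.Projective R P' ∧
        (∃ (β : P →ₗ[R] P') (γ : P' →ₗ[R] Q), γ.comp β = α) ∧ d.dim P' = x} := by
    refine ⟨0, fun x hx => ?_⟩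
    obtain ⟨P', h1, h2, _, rfl⟩ := hx
    haveI := h1; haveI := h2
    exact d.dim_nonneg _ (Module.finitePresentation_of_projective R _)
  have hmem : d.dim N ∈ {x : ℝ | ∃ P' : ModuleCat.{0} R,
      Module.Finite R P' ∧ Module.Projective R P' ∧
        (∃ (β : P →ₗ[R] P') (γ : P' →ₗ[R] Q), γ.comp β = α) ∧ d.dim P' = x} := by
    refine ⟨ModuleCat.of R N, hNfin, hNproj, ⟨α.rangeRestrict, N.subtype, ?_⟩, rfl⟩
    ext x
    rfl
  have hle : d.dimMap α ≤ d.dim N := csInf_le hbdd hmem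
  -- conclude
  have h1 : d.dim P ≤ d.dim N := hα.1 ▸ hle
  have h2 : d.dim Q ≤ d.dim N := hα.2 ▸ hle
  have hk0 : d.dim (LinearMap.ker α) = 0 := by
    have := d.dim_nonneg _ fp1
    rw [hdP, hdke] at h1
    linarith
  have hk1 : d.dim (LinearMap.ker π) = 0 := by
    have := d.dim_nonneg _ fp3
    rw [hdQ] at h2
    linarith
  have hsub1 : Subsingleton (LinearMap.ker α) := hfaithful _ hfin1 hprj1 hk0
  have hsub2 : Subsingleton (LinearMap.ker π) := hfaithful _ hfin3 hprj3 hk1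
  constructor
  · rw [← LinearMap.ker_eq_bot (M := P)]
    exact Submodule.subsingleton_iff_eq_bot.1 hsub1
  · rw [← LinearMap.range_eq_top (f := α)]
    have hkerbot : LinearMap.ker π = ⊥ := Submodule.subsingleton_iff_eq_bot.1 hsub2
    have := hπ.isCompl.codisjoint
    rw [codisjoint_iff, hkerbot, sup_bot_eq] at this
    exact this



end
end
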